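/- Let G be a looped simple graph containing unlooped vertices u, v, w, x forming a matched 4-path: N(v)={u,w}, N(w)={v,x}, and N(u)∖{v} = N(x)∖{w}. Then the permutation α of W(G) given by the product of transpositions ((u,φ)(x,φ)) ((u,χ)(v,φ)) ((u,ψ)(w,χ)) ((v,χ)(x,ψ)) ((v,ψ)(w,ψ)) ((w,φ)(x,χ)) is an automorphism of the matroid M(IAS(G)). -/

import Mathlib

/-- The three column types of the matrix `IAS(G) = (I | A | I+A)`. -/
inductive GType : Type
  | phi | chi | psi
  deriving DecidableEq

instance instFintypeGType : Fintype GType where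
  elems := {GType.phi, GType.chi, GType.psi}
  complete := fun t => by cases t <;> simp

/-- The column of `IAS(G) = (I | A(G) | I+A(G))` indexed by a ground set element of
`W(G) = V × {φ, χ, ψ}`. -/
def iasCol {V : Type} [DecidableEq V] (A : Matrix V V (ZMod 2)) : V × GType → V → ZMod 2
  | (v, GType.phi) => fun w => if w = v then 1 else 0
  | (v, GType.chi) => fun w => A w v
  | (v, GType.psi) => fun w => (if w = v then 1 else 0) + A w v

/-- Independence in the binary matroid `M(IAS(G))`: a set of ground elements is independent
iff the corresponding columns of `IAS(G)` are linearly independent over `GF(2)`. -/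
def IasIndep {V : Type} [DecidableEq V] (A : Matrix V V (ZMod 2))
    (S : Set (V × GType)) : Prop :=
  LinearIndependent (ZMod 2) (fun p : S => iasCol A p.1)

/-- A circuit of `M(IAS(G))`: a minimal dependent set. -/
def IasCircuit {V : Type} [DecidableEq V] (A : Matrix V V (ZMod 2))
    (C : Set (V × GType)) : Prop :=
  ¬ IasIndep A C ∧ ∀ D : Set (V × GType), D ⊂ C → IasIndep A D

/-- The rank of a subset of the ground set of `M(IAS(G))`: the `GF(2)`-rank of the
corresponding set of columns of `IAS(G)`. -/
noncomputable def iasRk {V : Type} [Fintype V] [DecidableEq V] (A : Matrix V V (ZMod 2))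
    (S : Set (V × GType)) : ℕ :=
  Module.finrank (ZMod 2) (Submodule.span (ZMod 2) (iasCol A '' S))

/-- The underlying function of the linear involution realizing the bent-4-path
permutation on columns of `IAS(G)`. -/
def bendTfun {V : Type} [DecidableEq V] (A : Matrix V V (ZMod 2)) (u v w x : V)
    (f : V → ZMod 2) : V → ZMod 2 := fun s =>
  f s + (f u + f x) * ((if s = u then 1 else 0) + (if s = x then 1 else 0))
      + f v * ((if s = v then 1 else 0) + A s u) + f w * ((if s = w then 1 else 0) + A s x)

/-- `bendTfun` as a linear map. -/
def bendT {V : Type} [DecidableEq V] (A : Matrix V V (ZMod 2)) (u v w x : V) :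
    (V → ZMod 2) →ₗ[ZMod 2] (V → ZMod 2) where
  toFun := bendTfun A u v w x
  map_add' f g := by funext s; simp only [bendTfun, Pi.add_apply]; ring
  map_smul' c f := by
    funext s
    simp only [bendTfun, Pi.smul_apply, smul_eq_mul, RingHom.id_apply]
    ring

lemma zmod2_cases (a : ZMod 2) : a = 0 ∨ a = 1 := by revert a; decide

/-- If a ground-set permutation is intertwined with an injective linear map on columns,
it maps independent sets to independent sets. -/
lemma indep_image_of_comm {V : Type} [DecidableEq V] (A : Matrix V V (ZMod 2))
    (β : Equiv.Perm (V × GType)) (T : (V → ZMod 2) →ₗ[ZMod 2] (V → ZMod 2))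
    (hker : LinearMap.ker T = ⊥)
    (hcomm : ∀ p, iasCol A (β p) = T (iasCol A p))
    (S : Set (V × GType)) (h : IasIndep A S) : IasIndep A (⇑β '' S) := by
  unfold IasIndep at *
  have h3 : LinearIndependent (ZMod 2) (fun p : S => iasCol A (β p.1)) := by
    have h2 := (LinearMap.linearIndependent_iff T hker).mpr h
    have he : (fun p : S => iasCol A (β p.1)) = ⇑T ∘ (fun p : S => iasCol A p.1) :=
      funext fun p => hcomm p.1
    rwa [he]
  let e : S ≃ (⇑β '' S : Set (V × GType)) := Equiv.Set.image β S β.injective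
  have he : (fun q : (⇑β '' S : Set (V × GType)) => iasCol A q.1) ∘ e
      = fun p : S => iasCol A (β p.1) := rfl
  exact (linearIndependent_equiv e).mp (he ▸ h3)

set_option maxHeartbeats 1600000 in
lemma bendT_comm_u {V : Type} [DecidableEq V] (A : Matrix V V (ZMod 2)) (u v w x : V)
    (huv : u ≠ v) (huw : u ≠ w) (hux : u ≠ x) (hvw : v ≠ w) (hvx : v ≠ x)
    (hwx : w ≠ x)
    (hu : A u u = 0) (hv : A v v = 0) (hw : A w w = 0) (hx : A x x = 0)
    (hAvu : A v u = 1) (hAwu : A w u = 0) (hAxu : A x u = 0)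
    (hav : ∀ s, A s v = (if s = u then (1 : ZMod 2) else 0) + (if s = w then 1 else 0))
    (haw : ∀ s, A s w = (if s = v then (1 : ZMod 2) else 0) + (if s = x then 1 else 0))
    (hax : ∀ s, A s x = A s u + (if s = v then (1 : ZMod 2) else 0)
      + (if s = w then 1 else 0)) (g : GType) :
    iasCol A ((((((Equiv.swap ((u, GType.phi)) ((x, GType.phi))).trans
          (Equiv.swap ((u, GType.chi)) ((v, GType.phi)))).trans
          (Equiv.swap ((u, GType.psi)) ((w, GType.chi)))).trans
          (Equiv.swap ((v, GType.chi)) ((x, GType.psi)))).trans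
          ((Equiv.swap ((v, GType.psi)) ((w, GType.psi))).trans
          (Equiv.swap ((w, GType.phi)) ((x, GType.chi))))) (u, g))
      = bendTfun A u v w x (iasCol A (u, g)) := by
  cases g <;>
  · funext s
    simp only [Equiv.trans_apply, Equiv.swap_apply_def, Prod.mk.injEq]
    simp only [iasCol, bendTfun,
      huv, huw, hux, hvw, hvx, hwx,
      Ne.symm huv, Ne.symm huw, Ne.symm hux, Ne.symm hvw, Ne.symm hvx, Ne.symm hwx]
    simp only [hax, hav, haw]
    simp [hu, hAvu, hAwu, hAxu, huv, huw, hux, hvw, hvx, hwx,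
      Ne.symm huv, Ne.symm huw, Ne.symm hux, Ne.symm hvw, Ne.symm hvx, Ne.symm hwx]
    by_cases hsu : s = u <;> by_cases hsv : s = v <;> by_cases hsw : s = w <;>
      by_cases hsx : s = x <;>
      simp_all <;>
      (try generalize A s u = a0) <;>
      (try revert a0) <;>
      decide

set_option maxHeartbeats 1600000 in
lemma bendT_comm_v {V : Type} [DecidableEq V] (A : Matrix V V (ZMod 2)) (u v w x : V)
    (huv : u ≠ v) (huw : u ≠ w) (hux : u ≠ x) (hvw : v ≠ w) (hvx : v ≠ x)
    (hwx : w ≠ x)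
    (hu : A u u = 0) (hv : A v v = 0) (hw : A w w = 0) (hx : A x x = 0)
    (hAvu : A v u = 1) (hAwu : A w u = 0) (hAxu : A x u = 0)
    (hav : ∀ s, A s v = (if s = u then (1 : ZMod 2) else 0) + (if s = w then 1 else 0))
    (haw : ∀ s, A s w = (if s = v then (1 : ZMod 2) else 0) + (if s = x then 1 else 0))
    (hax : ∀ s, A s x = A s u + (if s = v then (1 : ZMod 2) else 0)
      + (if s = w then 1 else 0)) (g : GType) :
    iasCol A ((((((Equiv.swap ((u, GType.phi)) ((x, GType.phi))).trans
          (Equiv.swap ((u, GType.chi)) ((v, GType.phi)))).trans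
          (Equiv.swap ((u, GType.psi)) ((w, GType.chi)))).trans
          (Equiv.swap ((v, GType.chi)) ((x, GType.psi)))).trans
          ((Equiv.swap ((v, GType.psi)) ((w, GType.psi))).trans
          (Equiv.swap ((w, GType.phi)) ((x, GType.chi))))) (v, g))
      = bendTfun A u v w x (iasCol A (v, g)) := by
  cases g <;>
  · funext s
    simp only [Equiv.trans_apply, Equiv.swap_apply_def, Prod.mk.injEq]
    simp only [iasCol, bendTfun,
      huv, huw, hux, hvw, hvx, hwx,
      Ne.symm huv, Ne.symm huw, Ne.symm hux, Ne.symm hvw, Ne.symm hvx, Ne.symm hwx]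
    simp only [hax, hav, haw]
    simp [hu, hAvu, hAwu, hAxu, huv, huw, hux, hvw, hvx, hwx,
      Ne.symm huv, Ne.symm huw, Ne.symm hux, Ne.symm hvw, Ne.symm hvx, Ne.symm hwx]
    by_cases hsu : s = u <;> by_cases hsv : s = v <;> by_cases hsw : s = w <;>
      by_cases hsx : s = x <;>
      simp_all <;>
      (try generalize A s u = a0) <;>
      (try revert a0) <;>
      decide

set_option maxHeartbeats 1600000 in
lemma bendT_comm_w {V : Type} [DecidableEq V] (A : Matrix V V (ZMod 2)) (u v w x : V)
    (huv : u ≠ v) (huw : u ≠ w) (hux : u ≠ x) (hvw : v ≠ w) (hvx : v ≠ x)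
    (hwx : w ≠ x)
    (hu : A u u = 0) (hv : A v v = 0) (hw : A w w = 0) (hx : A x x = 0)
    (hAvu : A v u = 1) (hAwu : A w u = 0) (hAxu : A x u = 0)
    (hav : ∀ s, A s v = (if s = u then (1 : ZMod 2) else 0) + (if s = w then 1 else 0))
    (haw : ∀ s, A s w = (if s = v then (1 : ZMod 2) else 0) + (if s = x then 1 else 0))
    (hax : ∀ s, A s x = A s u + (if s = v then (1 : ZMod 2) else 0)
      + (if s = w then 1 else 0)) (g : GType) :
    iasCol A ((((((Equiv.swap ((u, GType.phi)) ((x, GType.phi))).trans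
          (Equiv.swap ((u, GType.chi)) ((v, GType.phi)))).trans
          (Equiv.swap ((u, GType.psi)) ((w, GType.chi)))).trans
          (Equiv.swap ((v, GType.chi)) ((x, GType.psi)))).trans
          ((Equiv.swap ((v, GType.psi)) ((w, GType.psi))).trans
          (Equiv.swap ((w, GType.phi)) ((x, GType.chi))))) (w, g))
      = bendTfun A u v w x (iasCol A (w, g)) := by
  cases g <;>
  · funext s
    simp only [Equiv.trans_apply, Equiv.swap_apply_def, Prod.mk.injEq]
    simp only [iasCol, bendTfun,
      huv, huw, hux, hvw, hvx, hwx,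
      Ne.symm huv, Ne.symm huw, Ne.symm hux, Ne.symm hvw, Ne.symm hvx, Ne.symm hwx]
    simp only [hax, hav, haw]
    simp [hu, hAvu, hAwu, hAxu, huv, huw, hux, hvw, hvx, hwx,
      Ne.symm huv, Ne.symm huw, Ne.symm hux, Ne.symm hvw, Ne.symm hvx, Ne.symm hwx]
    by_cases hsu : s = u <;> by_cases hsv : s = v <;> by_cases hsw : s = w <;>
      by_cases hsx : s = x <;>
      simp_all <;>
      (try generalize A s u = a0) <;>
      (try revert a0) <;>
      decide

set_option maxHeartbeats 1600000 in
lemma bendT_comm_x {V : Type} [DecidableEq V] (A : Matrix V V (ZMod 2)) (u v w x : V)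
    (huv : u ≠ v) (huw : u ≠ w) (hux : u ≠ x) (hvw : v ≠ w) (hvx : v ≠ x)
    (hwx : w ≠ x)
    (hu : A u u = 0) (hv : A v v = 0) (hw : A w w = 0) (hx : A x x = 0)
    (hAvu : A v u = 1) (hAwu : A w u = 0) (hAxu : A x u = 0)
    (hav : ∀ s, A s v = (if s = u then (1 : ZMod 2) else 0) + (if s = w then 1 else 0))
    (haw : ∀ s, A s w = (if s = v then (1 : ZMod 2) else 0) + (if s = x then 1 else 0))
    (hax : ∀ s, A s x = A s u + (if s = v then (1 : ZMod 2) else 0)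
      + (if s = w then 1 else 0)) (g : GType) :
    iasCol A ((((((Equiv.swap ((u, GType.phi)) ((x, GType.phi))).trans
          (Equiv.swap ((u, GType.chi)) ((v, GType.phi)))).trans
          (Equiv.swap ((u, GType.psi)) ((w, GType.chi)))).trans
          (Equiv.swap ((v, GType.chi)) ((x, GType.psi)))).trans
          ((Equiv.swap ((v, GType.psi)) ((w, GType.psi))).trans
          (Equiv.swap ((w, GType.phi)) ((x, GType.chi))))) (x, g))
      = bendTfun A u v w x (iasCol A (x, g)) := by
  cases g <;>
  · funext s
    simp only [Equiv.trans_apply, Equiv.swap_apply_def, Prod.mk.injEq]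
    simp only [iasCol, bendTfun,
      huv, huw, hux, hvw, hvx, hwx,
      Ne.symm huv, Ne.symm huw, Ne.symm hux, Ne.symm hvw, Ne.symm hvx, Ne.symm hwx]
    simp only [hax, hav, haw]
    simp [hu, hAvu, hAwu, hAxu, huv, huw, hux, hvw, hvx, hwx,
      Ne.symm huv, Ne.symm huw, Ne.symm hux, Ne.symm hvw, Ne.symm hvx, Ne.symm hwx]
    by_cases hsu : s = u <;> by_cases hsv : s = v <;> by_cases hsw : s = w <;>
      by_cases hsx : s = x <;>
      simp_all <;>
      (try generalize A s u = a0) <;>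
      (try revert a0) <;>
      decide

set_option maxHeartbeats 1600000 in
lemma bendT_comm_t {V : Type} [DecidableEq V] (A : Matrix V V (ZMod 2)) (u v w x t : V)
    (huv : u ≠ v) (huw : u ≠ w) (hux : u ≠ x) (hvw : v ≠ w) (hvx : v ≠ x)
    (hwx : w ≠ x)
    (htu : t ≠ u) (htv : t ≠ v) (htw : t ≠ w) (htx : t ≠ x)
    (hAvt : A v t = 0) (hAwt : A w t = 0) (hAut : A u t = A x t)
    (g : GType) :
    iasCol A ((((((Equiv.swap ((u, GType.phi)) ((x, GType.phi))).trans
          (Equiv.swap ((u, GType.chi)) ((v, GType.phi)))).trans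
          (Equiv.swap ((u, GType.psi)) ((w, GType.chi)))).trans
          (Equiv.swap ((v, GType.chi)) ((x, GType.psi)))).trans
          ((Equiv.swap ((v, GType.psi)) ((w, GType.psi))).trans
          (Equiv.swap ((w, GType.phi)) ((x, GType.chi))))) (t, g))
      = bendTfun A u v w x (iasCol A (t, g)) := by
  cases g <;>
  · funext s
    simp only [Equiv.trans_apply, Equiv.swap_apply_def, Prod.mk.injEq]
    simp only [iasCol, bendTfun, htu, htv, htw, htx,
      Ne.symm htu, Ne.symm htv, Ne.symm htw, Ne.symm htx]
    simp [hAvt, hAwt, hAut, htu, htv, htw, htx,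
      Ne.symm htu, Ne.symm htv, Ne.symm htw, Ne.symm htx]
    try (
      by_cases hsu : s = u <;> by_cases hsv : s = v <;> by_cases hsw : s = w <;>
        by_cases hsx : s = x <;>
        simp_all <;>
        (try generalize A s t = a0) <;>
        (try generalize A x t = a1) <;>
        (try revert a0) <;> (try revert a1) <;>
        decide)

set_option maxHeartbeats 1600000 in
lemma bendT_invol {V : Type} [DecidableEq V] (A : Matrix V V (ZMod 2)) (u v w x : V)
    (huv : u ≠ v) (huw : u ≠ w) (hux : u ≠ x) (hvw : v ≠ w) (hvx : v ≠ x)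
    (hwx : w ≠ x)
    (hu : A u u = 0)
    (hAvu : A v u = 1) (hAwu : A w u = 0) (hAxu : A x u = 0)
    (hax : ∀ s, A s x = A s u + (if s = v then (1 : ZMod 2) else 0)
      + (if s = w then 1 else 0))
    (f : V → ZMod 2) :
    bendTfun A u v w x (bendTfun A u v w x f) = f := by
  funext s
  simp only [bendTfun]
  simp only [hax]
  simp [hu, hAvu, hAwu, hAxu, huv, huw, hux, hvw, hvx, hwx,
    Ne.symm huv, Ne.symm huw, Ne.symm hux, Ne.symm hvw, Ne.symm hvx, Ne.symm hwx]
  by_cases hsu : s = u <;> by_cases hsv : s = v <;> by_cases hsw : s = w <;>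
    by_cases hsx : s = x <;>
    simp_all <;>
    (try generalize A s u = a0) <;>
    (try generalize f s = a1) <;>
    (try generalize f u = a2) <;>
    (try generalize f v = a3) <;>
    (try generalize f w = a4) <;>
    (try generalize f x = a5) <;>
    (try revert a0) <;> (try revert a1) <;> (try revert a2) <;>
    (try revert a3) <;> (try revert a4) <;> (try revert a5) <;>
    decide

/-- bending a matched 4-path `u,v,w,x` (all unlooped, `N(v)={u,w}`,
`N(w)={v,x}`, `N(u)∖{v} = N(x)∖{w}`) gives a matroid automorphism of `M(IAS(G))`: the
permutation `α = ((u,φ)(x,φ)) ((u,χ)(v,φ)) ((u,ψ)(w,χ)) ((v,χ)(x,ψ)) ((v,ψ)(w,ψ))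
((w,φ)(x,χ))` preserves independence. -/
theorem matched_four_path_automorphism {V : Type} [Fintype V] [DecidableEq V]
    (A : Matrix V V (ZMod 2)) (hA : A.IsSymm) (u v w x : V)
    (huv : u ≠ v) (huw : u ≠ w) (hux : u ≠ x) (hvw : v ≠ w) (hvx : v ≠ x)
    (hwx : w ≠ x)
    (hu : A u u = 0) (hv : A v v = 0) (hw : A w w = 0) (hx : A x x = 0)
    (hNv : ∀ t, (t ≠ v ∧ A t v = 1) ↔ (t = u ∨ t = w))
    (hNw : ∀ t, (t ≠ w ∧ A t w = 1) ↔ (t = v ∨ t = x))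
    (hmatch : ∀ t, t ≠ v → t ≠ w → A t u = A t x) :
    ∀ S : Set (V × GType),
      IasIndep A
        ((((((Equiv.swap ((u, GType.phi)) ((x, GType.phi))).trans
          (Equiv.swap ((u, GType.chi)) ((v, GType.phi)))).trans
          (Equiv.swap ((u, GType.psi)) ((w, GType.chi)))).trans
          (Equiv.swap ((v, GType.chi)) ((x, GType.psi)))).trans
          ((Equiv.swap ((v, GType.psi)) ((w, GType.psi))).trans
          (Equiv.swap ((w, GType.phi)) ((x, GType.chi))))) '' S) ↔
        IasIndep A S := by
  intro S
  set β := (((((Equiv.swap ((u, GType.phi)) ((x, GType.phi))).trans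
          (Equiv.swap ((u, GType.chi)) ((v, GType.phi)))).trans
          (Equiv.swap ((u, GType.psi)) ((w, GType.chi)))).trans
          (Equiv.swap ((v, GType.chi)) ((x, GType.psi)))).trans
          ((Equiv.swap ((v, GType.psi)) ((w, GType.psi))).trans
          (Equiv.swap ((w, GType.phi)) ((x, GType.chi))))) with hβ
  have sym : ∀ i j, A i j = A j i := fun i j => hA.apply j i
  have hAuv : A u v = 1 := ((hNv u).mpr (Or.inl rfl)).2
  have hAwv : A w v = 1 := ((hNv w).mpr (Or.inr rfl)).2
  have hAvw : A v w = 1 := ((hNw v).mpr (Or.inl rfl)).2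
  have hAxw : A x w = 1 := ((hNw x).mpr (Or.inr rfl)).2
  have hAxv : A x v = 0 := by
    rcases zmod2_cases (A x v) with h0 | h1
    · exact h0
    · rcases (hNv x).mp ⟨hvx.symm, h1⟩ with h | h
      · exact absurd h.symm hux
      · exact absurd h.symm hwx
  have hAuw : A u w = 0 := by
    rcases zmod2_cases (A u w) with h0 | h1
    · exact h0
    · rcases (hNw u).mp ⟨huw, h1⟩ with h | h
      · exact absurd h huv
      · exact absurd h hux
  have hAux : A u x = 0 := by rw [← hmatch u huv huw, hu]
  have hAxu : A x u = 0 := by rw [sym]; exact hAux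
  have hAwu : A w u = 0 := by rw [sym]; exact hAuw
  have hAvu : A v u = 1 := by rw [sym]; exact hAuv
  have hAvx : A v x = 0 := by rw [sym]; exact hAxv
  have hAwx : A w x = 1 := by rw [sym]; exact hAxw
  have hav : ∀ s, A s v = (if s = u then (1 : ZMod 2) else 0) + (if s = w then 1 else 0) := by
    intro s
    by_cases hsu : s = u
    · subst hsu; simp [huw, hAuv]
    · by_cases hsw : s = w
      · subst hsw; simp [hsu, hAwv]
      · by_cases hsv : s = v
        · subst hsv; simp [hsu, hsw, hv]
        · simp only [hsu, hsw, if_neg, add_zero]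
          rcases zmod2_cases (A s v) with h0 | h1
          · simpa using h0
          · exact absurd ((hNv s).mp ⟨hsv, h1⟩) (by simp [hsu, hsw])
  have haw : ∀ s, A s w = (if s = v then (1 : ZMod 2) else 0) + (if s = x then 1 else 0) := by
    intro s
    by_cases hsv : s = v
    · subst hsv; simp [hvx, hAvw]
    · by_cases hsx : s = x
      · subst hsx; simp [hsv, hAxw]
      · by_cases hsw : s = w
        · subst hsw; simp [hsv, hsx, hw]
        · simp only [hsv, hsx, if_neg, add_zero]
          rcases zmod2_cases (A s w) with h0 | h1
          · simpa using h0
          · exact absurd ((hNw s).mp ⟨hsw, h1⟩) (by simp [hsv, hsx])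
  have hax : ∀ s, A s x = A s u + (if s = v then (1 : ZMod 2) else 0)
      + (if s = w then 1 else 0) := by
    intro s
    by_cases hsv : s = v
    · subst hsv; simp [hvw, hAvx, hAvu] <;> decide
    · by_cases hsw : s = w
      · subst hsw; simp [hsv, hAwx, hAwu] <;> decide
      · rw [← hmatch s hsv hsw]; simp [hsv, hsw]
  have hTT : ∀ f : V → ZMod 2, bendTfun A u v w x (bendTfun A u v w x f) = f :=
    bendT_invol A u v w x huv huw hux hvw hvx hwx hu hAvu hAwu hAxu hax
  have hker : LinearMap.ker (bendT A u v w x) = ⊥ :=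
    LinearMap.ker_eq_bot.mpr (Function.LeftInverse.injective
      (g := ⇑(bendT A u v w x)) (fun f => hTT f))
  have hcomm : ∀ p, iasCol A (β p) = bendT A u v w x (iasCol A p) := by
    rintro ⟨t, g⟩
    show iasCol A (β (t, g)) = bendTfun A u v w x (iasCol A (t, g))
    rw [hβ]
    by_cases htu : t = u
    · rw [htu]
      exact bendT_comm_u A u v w x huv huw hux hvw hvx hwx hu hv hw hx
        hAvu hAwu hAxu hav haw hax g
    · by_cases htv : t = v
      · rw [htv]
        exact bendT_comm_v A u v w x huv huw hux hvw hvx hwx hu hv hw hx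
          hAvu hAwu hAxu hav haw hax g
      · by_cases htw : t = w
        · rw [htw]
          exact bendT_comm_w A u v w x huv huw hux hvw hvx hwx hu hv hw hx
            hAvu hAwu hAxu hav haw hax g
        · by_cases htx : t = x
          · rw [htx]
            exact bendT_comm_x A u v w x huv huw hux hvw hvx hwx hu hv hw hx
              hAvu hAwu hAxu hav haw hax g
          · have hAtv : A t v = 0 := by
              rcases zmod2_cases (A t v) with h0 | h1
              · exact h0
              · rcases (hNv t).mp ⟨htv, h1⟩ with h | h
                · exact absurd h htu
                · exact absurd h htw
            have hAtw : A t w = 0 := by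
              rcases zmod2_cases (A t w) with h0 | h1
              · exact h0
              · rcases (hNw t).mp ⟨htw, h1⟩ with h | h
                · exact absurd h htv
                · exact absurd h htx
            have hAvt : A v t = 0 := by rw [sym]; exact hAtv
            have hAwt : A w t = 0 := by rw [sym]; exact hAtw
            have hAut : A u t = A x t := by
              rw [sym u t, sym x t]; exact hmatch t htv htw
            exact bendT_comm_t A u v w x t huv huw hux hvw hvx hwx htu htv htw htx hAvt hAwt hAut g
  constructor
  · intro h
    have hcomm' : ∀ p, iasCol A (β.symm p) = bendT A u v w x (iasCol A p) := by
      intro p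
      have h1 := hcomm (β.symm p)
      rw [Equiv.apply_symm_apply] at h1
      rw [h1]
      show _ = bendTfun A u v w x (bendTfun A u v w x _)
      rw [hTT]
    have h2 := indep_image_of_comm A β.symm (bendT A u v w x) hker hcomm' _ h
    rwa [Equiv.symm_image_image] at h2
  · exact fun h => indep_image_of_comm A β (bendT A u v w x) hker hcomm S h
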